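/- Fix a test labeling y ∈ X and let Λ be the local polytope. Let p ∈ P^{2,y} be defined by sets Y_v ⊆ X_v \ {y_v} and let ḡ be the reduced cost vector for p. Suppose u ∈ V and i ∈ Y_u satisfy ḡ_u(i) + Σ_{v : uv∈E} ḡ_{uv}(i, y_v) + Σ_{v : vu∈E} ḡ_{vu}(y_v, i) ≤ 0. Then every q ∈ S_f ∩ P^{2,y} with q ≤ p satisfies q_u(i) = i. -/

import Mathlib

open Finset

noncomputable section

variable {V : Type*} [Fintype V] [DecidableEq V]
variable {X : V → Type*} [∀ v, Fintype (X v)] [∀ v, DecidableEq (X v)]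
variable {E : Finset (V × V)}

/-- The index set `I`: the constant component `∅`, unary components `(u, i)` and
pairwise components `(uv, ij)` for edges `uv ∈ E`. -/
abbrev GIdx (X : V → Type*) (E : Finset (V × V)) : Type _ :=
  Unit ⊕ (Σ v : V, X v) ⊕ (Σ e : {e : V × V // e ∈ E}, X e.1.1 × X e.1.2)

/-- Vectors in `ℝ^I` (cost vectors and relaxed labelings live in the same space). -/
abbrev GVec (X : V → Type*) (E : Finset (V × V)) : Type _ := GIdx X E → ℝ

/-- Index of the constant component. -/
def cIdx : GIdx X E := Sum.inl ()

/-- Index of the unary component `(v, i)`. -/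
def uIdx (v : V) (i : X v) : GIdx X E := Sum.inr (Sum.inl ⟨v, i⟩)

/-- Index of the pairwise component `(uv, ij)` of the edge `e = uv ∈ E`. -/
def pIdx (e : {e : V × V // e ∈ E}) (i : X e.1.1) (j : X e.1.2) : GIdx X E :=
  Sum.inr (Sum.inr ⟨e, (i, j)⟩)

/-- The energy `E_f(x) = f_∅ + Σ_v f_v(x_v) + Σ_{uv∈E} f_{uv}(x_u,x_v)`. -/
def energy (f : GVec X E) (x : ∀ v, X v) : ℝ :=
  f cIdx + ∑ v : V, f (uIdx v (x v)) +
    ∑ e : {e : V × V // e ∈ E}, f (pIdx e (x e.1.1) (x e.1.2))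

/-- The standard inner product on `ℝ^I`. -/
def dotp (f μ : GVec X E) : ℝ := ∑ idx : GIdx X E, f idx * μ idx

/-- The lifting (overcomplete representation) `δ : X → ℝ^I`. -/
def lift (x : ∀ v, X v) : GVec X E := fun idx =>
  match idx with
  | Sum.inl _ => 1
  | Sum.inr (Sum.inl ⟨v, i⟩) => if x v = i then 1 else 0
  | Sum.inr (Sum.inr ⟨e, (i, j)⟩) => if x e.1.1 = i ∧ x e.1.2 = j then 1 else 0

/-- Application of a node-wise substitution to a labeling: `p(x)_v = p_v(x_v)`. -/
def applySub (p : ∀ v, X v → X v) (x : ∀ v, X v) : ∀ v, X v := fun v => p v (x v)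

/-- All the component maps `p_v` are idempotent. -/
def NodewiseIdem (p : ∀ v, X v → X v) : Prop := ∀ (v : V) (i : X v), p v (p v i) = p v i

/-- `p` is strictly improving for the cost vector `f`:
`E_f(p(x)) < E_f(x)` whenever `p(x) ≠ x`. -/
def StrictlyImproving (f : GVec X E) (p : ∀ v, X v → X v) : Prop :=
  ∀ x : ∀ v, X v, applySub p x ≠ x → energy f (applySub p x) < energy f x

/-- The adjoint `[p]ᵀ` of the linear extension of a node-wise substitution `p`,
acting on cost vectors: `([p]ᵀ f)_∅ = f_∅`, `([p]ᵀ f)_u(i) = f_u(p_u(i))`,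
`([p]ᵀ f)_{uv}(i,j) = f_{uv}(p_u(i), p_v(j))`. -/
def Padj (p : ∀ v, X v → X v) (f : GVec X E) : GVec X E := fun idx =>
  match idx with
  | Sum.inl _ => f cIdx
  | Sum.inr (Sum.inl ⟨v, i⟩) => f (uIdx v (p v i))
  | Sum.inr (Sum.inr ⟨e, (i, j)⟩) => f (pIdx e (p e.1.1 i) (p e.1.2 j))

/-- The linear extension `[p] : ℝ^I → ℝ^I` of a node-wise substitution `p`
(the adjoint of `Padj p` with respect to `dotp`): it satisfies `δ(p(x)) = [p] δ(x)`. -/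
def Pmap (p : ∀ v, X v → X v) (μ : GVec X E) : GVec X E := fun idx =>
  match idx with
  | Sum.inl _ => μ cIdx
  | Sum.inr (Sum.inl ⟨v, i⟩) => ∑ i' : X v, if p v i' = i then μ (uIdx v i') else 0
  | Sum.inr (Sum.inr ⟨e, (i, j)⟩) =>
      ∑ i' : X e.1.1, ∑ j' : X e.1.2,
        if p e.1.1 i' = i ∧ p e.1.2 j' = j then μ (pIdx e i' j') else 0

/-- `p` is strictly `Λ`-improving for `f` (`p ∈ S_f`):
`min_{μ∈Λ} ⟨f − [p]ᵀf, μ⟩ = 0` and every minimizer `μ` satisfies `[p]μ = μ`. -/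
def StrictlyLambdaImproving (Λ : Set (GVec X E)) (f : GVec X E)
    (p : ∀ v, X v → X v) : Prop :=
  IsLeast {r : ℝ | ∃ μ ∈ Λ, dotp (f - Padj p f) μ = r} 0 ∧
    ∀ μ ∈ Λ, dotp (f - Padj p f) μ = 0 → Pmap p μ = μ

/-- The subset-to-one substitution determined by a test labeling `y` and
sets `Y_v` of labels replaced by `y_v`. -/
def subToOne (y : ∀ v, X v) (Y : ∀ v, Finset (X v)) : ∀ v, X v → X v :=
  fun v i => if i ∈ Y v then y v else i

/-- Membership in the class `P^{2,y}` of subset-to-one substitutions. -/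
def InPtwo (y : ∀ v, X v) (p : ∀ v, X v → X v) : Prop :=
  ∃ Y : ∀ v, Finset (X v), (∀ v, y v ∉ Y v) ∧
    ∀ (v : V) (i : X v), p v i = if i ∈ Y v then y v else i

/-- The local polytope `Λ`. -/
def localPolytope (X : V → Type*) [∀ v, Fintype (X v)] (E : Finset (V × V)) :
    Set (GVec X E) :=
  { μ | (∀ idx, 0 ≤ μ idx) ∧ μ cIdx = 1 ∧
      (∀ u : V, ∑ i : X u, μ (uIdx u i) = μ cIdx) ∧
      (∀ (e : {e : V × V // e ∈ E}) (i : X e.1.1),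
        ∑ j : X e.1.2, μ (pIdx e i j) = μ (uIdx e.1.1 i)) ∧
      (∀ (e : {e : V × V // e ∈ E}) (j : X e.1.2),
        ∑ i : X e.1.1, μ (pIdx e i j) = μ (uIdx e.1.2 j)) }

/-- A dual vector `φ`: for each edge `uv ∈ E` messages `φ_{uv} : X_u → ℝ` (to the tail)
and `φ_{vu} : X_v → ℝ` (to the head), and a number `φ_u` for every node. -/
structure GDual (X : V → Type*) (E : Finset (V × V)) where
  fwd : ∀ e : {e : V × V // e ∈ E}, X e.1.1 → ℝ
  bwd : ∀ e : {e : V × V // e ∈ E}, X e.1.2 → ℝ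
  nd : V → ℝ

/-- Reparametrized unary cost `g^φ_u(i) = g_u(i) + Σ_{v∈nb(u)} φ_{uv}(i) − φ_u`. -/
def repUn (g : GVec X E) (φ : GDual X E) (u : V) (i : X u) : ℝ :=
  g (uIdx u i) +
    (∑ e : {e : V × V // e ∈ E},
      ((if h : e.1.1 = u then φ.fwd e (cast (congrArg X h.symm) i) else 0) +
        (if h : e.1.2 = u then φ.bwd e (cast (congrArg X h.symm) i) else 0))) -
    φ.nd u

/-- Reparametrized pairwise cost `g^φ_{uv}(i,j) = g_{uv}(i,j) − φ_{uv}(i) − φ_{vu}(j)`. -/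
def repPw (g : GVec X E) (φ : GDual X E) (e : {e : V × V // e ∈ E})
    (i : X e.1.1) (j : X e.1.2) : ℝ :=
  g (pIdx e i j) - φ.fwd e i - φ.bwd e j

/-- Reparametrized constant `g^φ_∅ = g_∅ + Σ_u φ_u` (the dual lower bound). -/
def repC (g : GVec X E) (φ : GDual X E) : ℝ := g cIdx + ∑ u : V, φ.nd u

/-- Dual feasibility: `g^φ ≥ 0` componentwise. -/
def DualFeasible (g : GVec X E) (φ : GDual X E) : Prop :=
  (∀ (u : V) (i : X u), 0 ≤ repUn g φ u i) ∧
    ∀ (e : {e : V × V // e ∈ E}) (i : X e.1.1) (j : X e.1.2), 0 ≤ repPw g φ e i j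

/-- Arc consistency of the reparametrized cost `g^φ`. -/
def ArcConsistent (g : GVec X E) (φ : GDual X E) : Prop :=
  (∀ (e : {e : V × V // e ∈ E}) (i : X e.1.1) (j : X e.1.2),
      repPw g φ e i j = 0 → repUn g φ e.1.1 i = 0 ∧ repUn g φ e.1.2 j = 0) ∧
  (∀ (e : {e : V × V // e ∈ E}) (i : X e.1.1),
      repUn g φ e.1.1 i = 0 → ∃ j : X e.1.2, repPw g φ e i j = 0) ∧
  (∀ (e : {e : V × V // e ∈ E}) (j : X e.1.2),
      repUn g φ e.1.2 j = 0 → ∃ i : X e.1.1, repPw g φ e i j = 0)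

/-- The reduced cost vector `ḡ` associated with the subset-to-one substitution `p ∈ P^{2,y}`
given by the sets `Y_v` (where `g = f − [p]ᵀ f`). -/
def reduced (f : GVec X E) (y : ∀ v, X v) (Y : ∀ v, Finset (X v)) : GVec X E :=
  fun idx =>
    match idx with
    | Sum.inl _ => 0
    | Sum.inr (Sum.inl ⟨v, i⟩) => (f - Padj (subToOne y Y) f) (uIdx v i)
    | Sum.inr (Sum.inr ⟨e, (i, j)⟩) =>
        let g : GVec X E := f - Padj (subToOne y Y) f
        let dvu : ℝ := sInf ((fun i' => g (pIdx e i' j)) '' {i' : X e.1.1 | i' ∉ Y e.1.1})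
        let duv : ℝ := sInf ((fun j' => g (pIdx e i j')) '' {j' : X e.1.2 | j' ∉ Y e.1.2})
        if i ∈ Y e.1.1 then
          if j ∈ Y e.1.2 then min (dvu + duv) (g (pIdx e i j)) else duv
        else if j ∈ Y e.1.2 then dvu else 0

/-! ### Auxiliary lemmas -/

section Aux
set_option linter.unusedSectionVars false

def ind (a : GIdx X E) : GVec X E := fun b => if b = a then 1 else 0

lemma cIdx_ne_uIdx (v : V) (k : X v) : (cIdx : GIdx X E) ≠ uIdx v k := by
  simp [cIdx, uIdx]

lemma pIdx_ne_uIdx (e : {e : V × V // e ∈ E}) (a : X e.1.1) (b : X e.1.2)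
    (v : V) (k : X v) : pIdx e a b ≠ uIdx v k := by
  simp [pIdx, uIdx]

lemma pIdx_ne_cIdx (e : {e : V × V // e ∈ E}) (a : X e.1.1) (b : X e.1.2) :
    pIdx e a b ≠ cIdx := by
  simp [pIdx, cIdx]

lemma pIdx_eq_pIdx_iff (e : {e : V × V // e ∈ E}) (a c : X e.1.1) (b d : X e.1.2) :
    pIdx e a b = pIdx e c d ↔ a = c ∧ b = d := by
  simp [pIdx]

lemma pIdx_ne_pIdx (e e' : {e : V × V // e ∈ E}) (he : e ≠ e')
    (a : X e.1.1) (b : X e.1.2) (c : X e'.1.1) (d : X e'.1.2) :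
    pIdx e a b ≠ pIdx e' c d := by
  simp only [pIdx, ne_eq, Sum.inr.injEq, Sigma.mk.inj_iff]
  rintro ⟨rfl, -⟩; exact he rfl

lemma uIdx_eq_uIdx_iff (v : V) (a b : X v) : (uIdx v a : GIdx X E) = uIdx v b ↔ a = b := by
  simp [uIdx]

lemma ind_apply_self (a : GIdx X E) : ind a a = 1 := by simp [ind]

lemma ind_apply_ne {a b : GIdx X E} (h : b ≠ a) : ind a b = 0 := by simp [ind, h]

lemma dotp_decomp (φ μ : GVec X E) :
    dotp φ μ = φ cIdx * μ cIdx + (∑ v : V, ∑ k : X v, φ (uIdx v k) * μ (uIdx v k)) +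
      ∑ e : {e : V × V // e ∈ E}, ∑ a : X e.1.1, ∑ b : X e.1.2,
        φ (pIdx e a b) * μ (pIdx e a b) := by
  rw [dotp, Fintype.sum_sum_type, Fintype.sum_sum_type]
  rw [show (Finset.univ : Finset (Σ v : V, X v)) = Finset.univ.sigma (fun _ => Finset.univ)
    from (Finset.univ_sigma_univ).symm, Finset.sum_sigma]
  rw [show (Finset.univ : Finset (Σ e : {e : V × V // e ∈ E}, X e.1.1 × X e.1.2))
      = Finset.univ.sigma (fun _ => Finset.univ) from (Finset.univ_sigma_univ).symm,
    Finset.sum_sigma]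
  simp only [Fintype.sum_prod_type, Fintype.sum_unique]
  show _ + (_ + _) = _
  rw [← add_assoc]
  rfl

lemma dotp_add_right (φ μ ν : GVec X E) : dotp φ (μ + ν) = dotp φ μ + dotp φ ν := by
  simp [dotp, mul_add, Finset.sum_add_distrib]

lemma dotp_sub_right (φ μ ν : GVec X E) : dotp φ (μ - ν) = dotp φ μ - dotp φ ν := by
  simp [dotp, mul_sub, Finset.sum_sub_distrib]

lemma dotp_smul_right (φ : GVec X E) (c : ℝ) (μ : GVec X E) :
    dotp φ (c • μ) = c * dotp φ μ := by
  rw [dotp, dotp, Finset.mul_sum]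
  exact Finset.sum_congr rfl fun a _ => by simp [mul_comm, mul_left_comm]

lemma dotp_sum_right {α : Type*} (φ : GVec X E) (s : Finset α) (μ : α → GVec X E) :
    dotp φ (∑ a ∈ s, μ a) = ∑ a ∈ s, dotp φ (μ a) := by
  classical
  induction s using Finset.induction with
  | empty => simp [dotp]
  | insert _ _ h ih => rw [Finset.sum_insert h, dotp_add_right, ih, Finset.sum_insert h]

lemma dotp_zero_right (φ : GVec X E) : dotp φ (0 : GVec X E) = 0 := by simp [dotp]

lemma dotp_ind_right (φ : GVec X E) (a : GIdx X E) : dotp φ (ind a) = φ a := by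
  rw [dotp]
  rw [Finset.sum_eq_single a]
  · simp [ind]
  · intro b _ hb; simp [ind, hb]
  · intro h; simp at h

lemma dotp_lift (φ : GVec X E) (x : ∀ v, X v) : dotp φ (lift x) = energy φ x := by
  rw [dotp_decomp, energy]
  congr 1
  · congr 1
    · simp [lift, cIdx]
    · refine Finset.sum_congr rfl fun v _ => ?_
      rw [Finset.sum_eq_single (x v)]
      · simp [lift, uIdx]
      · intro k _ hk; simp [lift, uIdx, Ne.symm hk]
      · intro h; simp at h
  · refine Finset.sum_congr rfl fun e _ => ?_
    rw [Finset.sum_eq_single (x e.1.1)]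
    · rw [Finset.sum_eq_single (x e.1.2)]
      · simp [lift, pIdx]
      · intro k _ hk; simp [lift, pIdx, Ne.symm hk]
      · intro h; simp at h
    · intro k _ hk
      refine Finset.sum_eq_zero fun b _ => ?_
      simp [lift, pIdx, Ne.symm hk]
    · intro h; simp at h

end Aux
section Aux2
set_option linter.unusedSectionVars false

lemma lift_cIdx (x : ∀ v, X v) : lift x (cIdx : GIdx X E) = 1 := rfl

lemma lift_uIdx (x : ∀ v, X v) (v : V) (k : X v) :
    lift x (uIdx v k : GIdx X E) = if x v = k then 1 else 0 := rfl

lemma lift_pIdx (x : ∀ v, X v) (e : {e : V × V // e ∈ E}) (a : X e.1.1) (b : X e.1.2) :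
    lift x (pIdx e a b) = if x e.1.1 = a ∧ x e.1.2 = b then 1 else 0 := rfl

lemma lift_nonneg (x : ∀ v, X v) (idx : GIdx X E) : 0 ≤ lift x idx := by
  rcases idx with _ | (⟨v, k⟩ | ⟨e, a, b⟩) <;> simp [lift] <;> positivity

lemma lift_node_sum (x : ∀ v, X v) (v : V) :
    ∑ k : X v, lift x (uIdx v k : GIdx X E) = 1 := by
  rw [Finset.sum_eq_single (x v)]
  · simp [lift_uIdx]
  · intro k _ hk; simp [lift_uIdx, Ne.symm hk]
  · intro h; simp at h

lemma lift_row_sum (x : ∀ v, X v) (e : {e : V × V // e ∈ E}) (a : X e.1.1) :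
    ∑ b : X e.1.2, lift x (pIdx e a b) = lift x (uIdx e.1.1 a : GIdx X E) := by
  rw [Finset.sum_eq_single (x e.1.2)]
  · simp [lift_pIdx, lift_uIdx]
  · intro b _ hb; simp [lift_pIdx, Ne.symm hb]
  · intro h; simp at h

lemma lift_col_sum (x : ∀ v, X v) (e : {e : V × V // e ∈ E}) (b : X e.1.2) :
    ∑ a : X e.1.1, lift x (pIdx e a b) = lift x (uIdx e.1.2 b : GIdx X E) := by
  rw [Finset.sum_eq_single (x e.1.1)]
  · simp [lift_pIdx, lift_uIdx]
  · intro a _ ha; simp [lift_pIdx, Ne.symm ha]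
  · intro h; simp at h

/-- A pairwise correction vector with zero marginals, supported on edge `e`. -/
def corr4 (e : {e : V × V // e ∈ E}) (a₁ a₂ : X e.1.1) (b₁ b₂ : X e.1.2) : GVec X E :=
  ind (pIdx e a₁ b₁) - ind (pIdx e a₁ b₂) - ind (pIdx e a₂ b₁) + ind (pIdx e a₂ b₂)

lemma corr4_cIdx (e : {e : V × V // e ∈ E}) (a₁ a₂ : X e.1.1) (b₁ b₂ : X e.1.2) :
    corr4 e a₁ a₂ b₁ b₂ cIdx = 0 := by
  simp [corr4, ind, cIdx, pIdx]

lemma corr4_uIdx (e : {e : V × V // e ∈ E}) (a₁ a₂ : X e.1.1) (b₁ b₂ : X e.1.2)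
    (v : V) (k : X v) : corr4 e a₁ a₂ b₁ b₂ (uIdx v k) = 0 := by
  simp [corr4, ind, uIdx, pIdx]

lemma corr4_pIdx (e : {e : V × V // e ∈ E}) (a₁ a₂ : X e.1.1) (b₁ b₂ : X e.1.2)
    (a : X e.1.1) (b : X e.1.2) :
    corr4 e a₁ a₂ b₁ b₂ (pIdx e a b) =
      (if a = a₁ ∧ b = b₁ then (1:ℝ) else 0) - (if a = a₁ ∧ b = b₂ then 1 else 0)
      - (if a = a₂ ∧ b = b₁ then 1 else 0) + (if a = a₂ ∧ b = b₂ then 1 else 0) := by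
  simp [corr4, ind, pIdx_eq_pIdx_iff]

lemma corr4_pIdx_ne (e e' : {e : V × V // e ∈ E}) (he : e' ≠ e)
    (a₁ a₂ : X e.1.1) (b₁ b₂ : X e.1.2) (a : X e'.1.1) (b : X e'.1.2) :
    corr4 e a₁ a₂ b₁ b₂ (pIdx e' a b) = 0 := by
  simp [corr4, ind, pIdx, Sigma.mk.inj_iff, he]

lemma corr4_row_sum (e : {e : V × V // e ∈ E}) (a₁ a₂ : X e.1.1) (b₁ b₂ : X e.1.2)
    (a : X e.1.1) : ∑ b : X e.1.2, corr4 e a₁ a₂ b₁ b₂ (pIdx e a b) = 0 := by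
  simp only [corr4_pIdx, ite_and]
  simp [Finset.sum_ite_eq, Finset.sum_sub_distrib, Finset.sum_add_distrib]

lemma corr4_col_sum (e : {e : V × V // e ∈ E}) (a₁ a₂ : X e.1.1) (b₁ b₂ : X e.1.2)
    (b : X e.1.2) : ∑ a : X e.1.1, corr4 e a₁ a₂ b₁ b₂ (pIdx e a b) = 0 := by
  simp only [corr4_pIdx, and_comm, ite_and]
  simp [Finset.sum_ite_eq, Finset.sum_sub_distrib, Finset.sum_add_distrib]

lemma dotp_corr4 (φ : GVec X E) (e : {e : V × V // e ∈ E}) (a₁ a₂ : X e.1.1)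
    (b₁ b₂ : X e.1.2) :
    dotp φ (corr4 e a₁ a₂ b₁ b₂) =
      φ (pIdx e a₁ b₁) - φ (pIdx e a₁ b₂) - φ (pIdx e a₂ b₁) + φ (pIdx e a₂ b₂) := by
  rw [corr4, dotp_add_right, dotp_sub_right, dotp_sub_right]
  simp [dotp_ind_right]

end Aux2
section Aux3
set_option linter.unusedSectionVars false

variable (y : ∀ v, X v) (u : V) (i : X u)
variable (js : ∀ e : {e : V × V // e ∈ E}, X e.1.2)
variable (is' : ∀ e : {e : V × V // e ∈ E}, X e.1.1)

/-- Forward node move associated with edge `e` (nonzero only if the tail is `u`). -/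
def Fpiece (e : {e : V × V // e ∈ E}) : GVec X E :=
  if e.1.1 = u then lift (Function.update y e.1.2 (js e)) - lift y else 0

/-- Backward node move associated with edge `e` (nonzero only if the head is `u`). -/
def Bpiece (e : {e : V × V // e ∈ E}) : GVec X E :=
  if e.1.2 = u then lift (Function.update y e.1.1 (is' e)) - lift y else 0

/-- Edge-local correction associated with edge `e`. -/
def Lpiece (e : {e : V × V // e ∈ E}) : GVec X E :=
  if h1 : e.1.1 = u then
    (if h2 : e.1.2 = u then
      corr4 e (cast (congrArg X h1.symm) i) (cast (congrArg X (h2.trans h1.symm)) (js e))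
        (js e) (cast (congrArg X h2.symm) i)
      + corr4 e (is' e) (cast (congrArg X (h2.trans h1.symm)) (js e))
        (cast (congrArg X h2.symm) i) (cast (congrArg X (h1.trans h2.symm)) (is' e))
    else corr4 e (cast (congrArg X h1.symm) i) (y e.1.1) (js e) (y e.1.2))
  else if h2 : e.1.2 = u then
    corr4 e (is' e) (y e.1.1) (cast (congrArg X h2.symm) i) (y e.1.2)
  else 0

/-- The improving direction `ν`. -/
def nuVec : GVec X E :=
  (lift (Function.update y u i) - lift y)
  + ∑ e : {e : V × V // e ∈ E}, Fpiece y u js e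
  + ∑ e : {e : V × V // e ∈ E}, Bpiece y u is' e
  + ∑ e : {e : V × V // e ∈ E}, Lpiece y u i js is' e

lemma Lpiece_cIdx (e : {e : V × V // e ∈ E}) : Lpiece y u i js is' e cIdx = 0 := by
  unfold Lpiece
  split_ifs <;> simp [corr4_cIdx]

lemma Lpiece_uIdx (e : {e : V × V // e ∈ E}) (v : V) (k : X v) :
    Lpiece y u i js is' e (uIdx v k) = 0 := by
  unfold Lpiece
  split_ifs <;> simp [corr4_uIdx]

lemma Lpiece_pIdx_ne (e e' : {e : V × V // e ∈ E}) (he : e' ≠ e)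
    (a : X e'.1.1) (b : X e'.1.2) : Lpiece y u i js is' e (pIdx e' a b) = 0 := by
  unfold Lpiece
  split_ifs <;> simp [corr4_pIdx_ne _ _ he]

lemma Lpiece_row_sum (e : {e : V × V // e ∈ E}) (a : X e.1.1) :
    ∑ b : X e.1.2, Lpiece y u i js is' e (pIdx e a b) = 0 := by
  unfold Lpiece
  split_ifs <;>
    simp [corr4_row_sum, Finset.sum_add_distrib]

lemma Lpiece_col_sum (e : {e : V × V // e ∈ E}) (b : X e.1.2) :
    ∑ a : X e.1.1, Lpiece y u i js is' e (pIdx e a b) = 0 := by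
  unfold Lpiece
  split_ifs <;>
    simp [corr4_col_sum, Finset.sum_add_distrib]

end Aux3
section Aux4
set_option linter.unusedSectionVars false

variable (y : ∀ v, X v) (u : V) (i : X u)
variable (js : ∀ e : {e : V × V // e ∈ E}, X e.1.2)
variable (is' : ∀ e : {e : V × V // e ∈ E}, X e.1.1)

lemma nuVec_apply (idx : GIdx X E) :
    nuVec y u i js is' idx =
      (lift (Function.update y u i) idx - lift y idx)
      + (∑ e : {e : V × V // e ∈ E}, Fpiece y u js e idx)
      + (∑ e : {e : V × V // e ∈ E}, Bpiece y u is' e idx)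
      + (∑ e : {e : V × V // e ∈ E}, Lpiece y u i js is' e idx) := by
  simp [nuVec, Finset.sum_apply]

lemma Fpiece_apply (e : {e : V × V // e ∈ E}) (idx : GIdx X E) :
    Fpiece y u js e idx =
      if e.1.1 = u then lift (Function.update y e.1.2 (js e)) idx - lift y idx else 0 := by
  unfold Fpiece; split_ifs <;> simp

lemma Bpiece_apply (e : {e : V × V // e ∈ E}) (idx : GIdx X E) :
    Bpiece y u is' e idx =
      if e.1.2 = u then lift (Function.update y e.1.1 (is' e)) idx - lift y idx else 0 := by
  unfold Bpiece; split_ifs <;> simp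

lemma nuVec_cIdx : nuVec y u i js is' cIdx = 0 := by
  rw [nuVec_apply]
  simp [Fpiece_apply, Bpiece_apply, Lpiece_cIdx, lift_cIdx]

lemma nuVec_node_sum (v : V) : ∑ k : X v, nuVec y u i js is' (uIdx v k) = 0 := by
  simp only [nuVec_apply]
  rw [Finset.sum_add_distrib, Finset.sum_add_distrib, Finset.sum_add_distrib]
  have h1 : ∑ k : X v, (lift (Function.update y u i) (uIdx v k : GIdx X E)
      - lift y (uIdx v k : GIdx X E)) = 0 := by
    rw [Finset.sum_sub_distrib, lift_node_sum, lift_node_sum, sub_self]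
  have h2 : ∑ k : X v, ∑ e : {e : V × V // e ∈ E}, Fpiece y u js e (uIdx v k) = 0 := by
    rw [Finset.sum_comm]
    refine Finset.sum_eq_zero fun e _ => ?_
    simp only [Fpiece_apply]
    split_ifs
    · rw [Finset.sum_sub_distrib, lift_node_sum, lift_node_sum, sub_self]
    · simp
  have h3 : ∑ k : X v, ∑ e : {e : V × V // e ∈ E}, Bpiece y u is' e (uIdx v k) = 0 := by
    rw [Finset.sum_comm]
    refine Finset.sum_eq_zero fun e _ => ?_
    simp only [Bpiece_apply]
    split_ifs
    · rw [Finset.sum_sub_distrib, lift_node_sum, lift_node_sum, sub_self]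
    · simp
  rw [h1, h2, h3]
  simp [Lpiece_uIdx]

lemma nuVec_row_sum (e : {e : V × V // e ∈ E}) (a : X e.1.1) :
    ∑ b : X e.1.2, nuVec y u i js is' (pIdx e a b) =
      nuVec y u i js is' (uIdx e.1.1 a) := by
  simp only [nuVec_apply]
  rw [Finset.sum_add_distrib, Finset.sum_add_distrib, Finset.sum_add_distrib]
  congr 1
  · congr 1
    · congr 1
      · rw [Finset.sum_sub_distrib, lift_row_sum, lift_row_sum]
      · rw [Finset.sum_comm]
        refine Finset.sum_congr rfl fun e' _ => ?_
        simp only [Fpiece_apply]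
        split_ifs
        · rw [Finset.sum_sub_distrib, lift_row_sum, lift_row_sum]
        · simp
    · rw [Finset.sum_comm]
      refine Finset.sum_congr rfl fun e' _ => ?_
      simp only [Bpiece_apply]
      split_ifs
      · rw [Finset.sum_sub_distrib, lift_row_sum, lift_row_sum]
      · simp
  · rw [Finset.sum_comm]
    rw [Finset.sum_eq_zero fun e' (_ : e' ∈ Finset.univ) =>
      Lpiece_uIdx y u i js is' e' e.1.1 a]
    refine Finset.sum_eq_zero fun e' _ => ?_
    by_cases he' : e' = e
    · subst he'; exact Lpiece_row_sum y u i js is' e' a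
    · exact Finset.sum_eq_zero fun b _ => Lpiece_pIdx_ne y u i js is' e' e (Ne.symm he') a b

lemma nuVec_col_sum (e : {e : V × V // e ∈ E}) (b : X e.1.2) :
    ∑ a : X e.1.1, nuVec y u i js is' (pIdx e a b) =
      nuVec y u i js is' (uIdx e.1.2 b) := by
  simp only [nuVec_apply]
  rw [Finset.sum_add_distrib, Finset.sum_add_distrib, Finset.sum_add_distrib]
  congr 1
  · congr 1
    · congr 1
      · rw [Finset.sum_sub_distrib, lift_col_sum, lift_col_sum]
      · rw [Finset.sum_comm]
        refine Finset.sum_congr rfl fun e' _ => ?_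
        simp only [Fpiece_apply]
        split_ifs
        · rw [Finset.sum_sub_distrib, lift_col_sum, lift_col_sum]
        · simp
    · rw [Finset.sum_comm]
      refine Finset.sum_congr rfl fun e' _ => ?_
      simp only [Bpiece_apply]
      split_ifs
      · rw [Finset.sum_sub_distrib, lift_col_sum, lift_col_sum]
      · simp
  · rw [Finset.sum_comm]
    rw [Finset.sum_eq_zero fun e' (_ : e' ∈ Finset.univ) =>
      Lpiece_uIdx y u i js is' e' e.1.2 b]
    refine Finset.sum_eq_zero fun e' _ => ?_
    by_cases he' : e' = e
    · subst he'; exact Lpiece_col_sum y u i js is' e' b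
    · exact Finset.sum_eq_zero fun a _ => Lpiece_pIdx_ne y u i js is' e' e (Ne.symm he') a b

end Aux4
section Aux5
set_option linter.unusedSectionVars false
set_option maxHeartbeats 1600000
set_option maxRecDepth 100000

variable (y : ∀ v, X v) (u : V) (i : X u)
variable (js : ∀ e : {e : V × V // e ∈ E}, X e.1.2)
variable (is' : ∀ e : {e : V × V // e ∈ E}, X e.1.1)

lemma key_nonneg (c d : V) (hcd : (c, d) ∈ E) (a : X c) (b : X d)
    (h0 : lift y (pIdx (⟨(c, d), hcd⟩ : {e : V × V // e ∈ E}) a b) = 0) :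
    0 ≤ (lift (Function.update y u i) (pIdx (⟨(c, d), hcd⟩ : {e : V × V // e ∈ E}) a b)
          - lift y (pIdx (⟨(c, d), hcd⟩ : {e : V × V // e ∈ E}) a b))
        + Fpiece y u js ⟨(c, d), hcd⟩ (pIdx ⟨(c, d), hcd⟩ a b)
        + Bpiece y u is' ⟨(c, d), hcd⟩ (pIdx ⟨(c, d), hcd⟩ a b)
        + Lpiece y u i js is' ⟨(c, d), hcd⟩ (pIdx ⟨(c, d), hcd⟩ a b) := by
  simp only [lift_pIdx] at h0
  have hY' : ¬(y c = a ∧ y d = b) := by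
    intro h; rw [if_pos h] at h0; norm_num at h0
  by_cases h1 : c = u <;> by_cases h2 : d = u
  · subst h1; subst h2
    simp only [Fpiece, Bpiece, Lpiece, dite_true, ite_true]
    simp only [cast_eq, Pi.add_apply, Pi.sub_apply, corr4_pIdx, lift_pIdx]
    simp only [Function.update_self, Function.update_apply] at *
    rw [if_neg hY']
    simp only [@eq_comm _ _ a, @eq_comm _ _ b]
    split_ifs <;> norm_num
  · subst h1
    simp only [Fpiece, Bpiece, Lpiece, dite_true, ite_true, dif_neg h2, if_neg h2]
    simp only [cast_eq, Pi.add_apply, Pi.sub_apply, Pi.zero_apply, corr4_pIdx, lift_pIdx]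
    simp only [Function.update_self, Function.update_of_ne h2,
      Function.update_of_ne (Ne.symm h2)] at *
    rw [if_neg hY']
    simp only [@eq_comm _ _ a, @eq_comm _ _ b]
    split_ifs <;> norm_num
  · subst h2
    simp only [Fpiece, Bpiece, Lpiece, dite_true, ite_true, dif_neg h1, if_neg h1]
    simp only [cast_eq, Pi.add_apply, Pi.sub_apply, Pi.zero_apply, corr4_pIdx, lift_pIdx]
    simp only [Function.update_self, Function.update_of_ne h1,
      Function.update_of_ne (Ne.symm h1)] at *
    rw [if_neg hY']
    simp only [@eq_comm _ _ a, @eq_comm _ _ b]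
    split_ifs <;> norm_num
  · simp only [Fpiece, Bpiece, Lpiece, dif_neg h1, if_neg h1, dif_neg h2, if_neg h2]
    simp only [Pi.add_apply, Pi.sub_apply, Pi.zero_apply, lift_pIdx]
    simp only [Function.update_of_ne h1, Function.update_of_ne h2] at *
    split_ifs <;> norm_num

end Aux5
section Aux6
set_option linter.unusedSectionVars false
set_option maxHeartbeats 1600000
set_option maxRecDepth 100000

variable (y : ∀ v, X v) (u : V) (i : X u)
variable (js : ∀ e : {e : V × V // e ∈ E}, X e.1.2)
variable (is' : ∀ e : {e : V × V // e ∈ E}, X e.1.1)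

lemma Fpiece_nonneg (e : {e : V × V // e ∈ E}) (idx : GIdx X E) (h0 : lift y idx = 0) :
    0 ≤ Fpiece y u js e idx := by
  rw [Fpiece_apply]
  split_ifs
  · rw [h0, sub_zero]; exact lift_nonneg _ _
  · exact le_refl 0
lemma Bpiece_nonneg (e : {e : V × V // e ∈ E}) (idx : GIdx X E) (h0 : lift y idx = 0) :
    0 ≤ Bpiece y u is' e idx := by
  rw [Bpiece_apply]
  split_ifs
  · rw [h0, sub_zero]; exact lift_nonneg _ _
  · exact le_refl 0

lemma nuVec_nonneg (idx : GIdx X E) (h0 : lift y idx = 0) :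
    0 ≤ nuVec y u i js is' idx := by
  rcases idx with ⟨⟩ | (⟨v, k⟩ | ⟨⟨⟨c, d⟩, hcd⟩, a, b⟩)
  · simp [lift] at h0
  · rw [nuVec_apply]
    have hb : (0:ℝ) ≤ lift (Function.update y u i) (Sum.inr (Sum.inl ⟨v, k⟩) : GIdx X E)
        - lift y (Sum.inr (Sum.inl ⟨v, k⟩) : GIdx X E) := by
      rw [h0, sub_zero]; exact lift_nonneg _ _
    refine add_nonneg (add_nonneg (add_nonneg hb ?_) ?_) ?_
    · exact Finset.sum_nonneg fun e _ => Fpiece_nonneg y u js e _ h0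
    · exact Finset.sum_nonneg fun e _ => Bpiece_nonneg y u is' e _ h0
    · exact Finset.sum_nonneg fun e _ => (Lpiece_uIdx y u i js is' e v k).ge
  · show 0 ≤ nuVec y u i js is' (pIdx ⟨(c, d), hcd⟩ a b)
    have h0' : lift y (pIdx (⟨(c, d), hcd⟩ : {e : V × V // e ∈ E}) a b) = 0 := h0
    rw [nuVec_apply]
    have hL : ∑ e : {e : V × V // e ∈ E}, Lpiece y u i js is' e (pIdx ⟨(c, d), hcd⟩ a b)
        = Lpiece y u i js is' ⟨(c, d), hcd⟩ (pIdx ⟨(c, d), hcd⟩ a b) := by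
      rw [Finset.sum_eq_single (⟨(c, d), hcd⟩ : {e : V × V // e ∈ E})]
      · intro e' _ he'
        exact Lpiece_pIdx_ne y u i js is' e' ⟨(c, d), hcd⟩ (Ne.symm he') a b
      · intro h; simp at h
    rw [hL]
    have hF : Fpiece y u js ⟨(c, d), hcd⟩ (pIdx ⟨(c, d), hcd⟩ a b)
        ≤ ∑ e : {e : V × V // e ∈ E}, Fpiece y u js e (pIdx ⟨(c, d), hcd⟩ a b) :=
      Finset.single_le_sum (fun e _ => Fpiece_nonneg y u js e _ h0')
        (Finset.mem_univ (⟨(c, d), hcd⟩ : {e : V × V // e ∈ E}))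
    have hB : Bpiece y u is' ⟨(c, d), hcd⟩ (pIdx ⟨(c, d), hcd⟩ a b)
        ≤ ∑ e : {e : V × V // e ∈ E}, Bpiece y u is' e (pIdx ⟨(c, d), hcd⟩ a b) :=
      Finset.single_le_sum (fun e _ => Bpiece_nonneg y u is' e _ h0')
        (Finset.mem_univ (⟨(c, d), hcd⟩ : {e : V × V // e ∈ E}))
    have hkey := key_nonneg y u i js is' c d hcd a b h0'
    linarith
end Aux6
section Aux7
set_option linter.unusedSectionVars false
set_option maxHeartbeats 1600000
set_option maxRecDepth 100000

variable (f : GVec X E) (q : ∀ v, X v → X v)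
variable (y : ∀ v, X v) (u : V) (i : X u)

lemma h_cIdx : (f - Padj q f) cIdx = 0 := by
  show f cIdx - Padj q f cIdx = 0
  rw [show Padj q f cIdx = f cIdx from rfl, sub_self]

lemma h_uIdx (v : V) (k : X v) :
    (f - Padj q f) (uIdx v k) = f (uIdx v k) - f (uIdx v (q v k)) := rfl

lemma h_pIdx (e : {e : V × V // e ∈ E}) (a : X e.1.1) (b : X e.1.2) :
    (f - Padj q f) (pIdx e a b)
      = f (pIdx e a b) - f (pIdx e (q e.1.1 a) (q e.1.2 b)) := rfl

lemma h_uIdx_fix (v : V) (k : X v) (hfix : q v k = k) :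
    (f - Padj q f) (uIdx v k) = 0 := by
  rw [h_uIdx, hfix, sub_self]

lemma h_pIdx_fix (e : {e : V × V // e ∈ E}) (a : X e.1.1) (b : X e.1.2)
    (ha : q e.1.1 a = a) (hb : q e.1.2 b = b) : (f - Padj q f) (pIdx e a b) = 0 := by
  rw [h_pIdx, ha, hb, sub_self]

lemma energy_fix (x : ∀ v, X v) (hfix : ∀ v, q v (x v) = x v) :
    energy (f - Padj q f) x = 0 := by
  rw [energy, h_cIdx]
  rw [Finset.sum_eq_zero fun v _ => h_uIdx_fix f q v (x v) (hfix v)]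
  rw [Finset.sum_eq_zero fun (e : {e : V × V // e ∈ E}) _ =>
    h_pIdx_fix f q e (x e.1.1) (x e.1.2) (hfix e.1.1) (hfix e.1.2)]
  norm_num

lemma dotp_move_zero (x : ∀ v, X v) (hfix : ∀ v, q v (x v) = x v)
    (hfy : ∀ v, q v (y v) = y v) :
    dotp (f - Padj q f) (lift x - lift y) = 0 := by
  rw [dotp_sub_right, dotp_lift, dotp_lift, energy_fix f q x hfix,
    energy_fix f q y hfy, sub_self]

lemma Fpiece_cost (js : ∀ e : {e : V × V // e ∈ E}, X e.1.2)
    (Y : ∀ v, Finset (X v)) (hjs : ∀ e, js e ∉ Y e.1.2)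
    (hq : ∀ (v : V) (k : X v), k ∉ Y v → q v k = k) (hY : ∀ v, y v ∉ Y v)
    (e : {e : V × V // e ∈ E}) :
    dotp (f - Padj q f) (Fpiece y u js e) = 0 := by
  unfold Fpiece
  split_ifs
  · refine dotp_move_zero f q y _ (fun v => ?_) (fun v => hq v (y v) (hY v))
    by_cases hv : v = e.1.2
    · subst hv; rw [Function.update_self]; exact hq _ _ (hjs e)
    · rw [Function.update_of_ne hv]; exact hq v (y v) (hY v)
  · exact dotp_zero_right _

lemma Bpiece_cost (is' : ∀ e : {e : V × V // e ∈ E}, X e.1.1)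
    (Y : ∀ v, Finset (X v)) (his : ∀ e, is' e ∉ Y e.1.1)
    (hq : ∀ (v : V) (k : X v), k ∉ Y v → q v k = k) (hY : ∀ v, y v ∉ Y v)
    (e : {e : V × V // e ∈ E}) :
    dotp (f - Padj q f) (Bpiece y u is' e) = 0 := by
  unfold Bpiece
  split_ifs
  · refine dotp_move_zero f q y _ (fun v => ?_) (fun v => hq v (y v) (hY v))
    by_cases hv : v = e.1.1
    · subst hv; rw [Function.update_self]; exact hq _ _ (his e)
    · rw [Function.update_of_ne hv]; exact hq v (y v) (hY v)
  · exact dotp_zero_right _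

lemma dotp_base (Y : ∀ v, Finset (X v)) (hY : ∀ v, y v ∉ Y v)
    (hq : ∀ (v : V) (k : X v), k ∉ Y v → q v k = k) :
    dotp (f - Padj q f) (lift (Function.update y u i) - lift y)
      = (f - Padj q f) (uIdx u i)
        + ∑ e : {e : V × V // e ∈ E}, (f - Padj q f)
            (pIdx e (Function.update y u i e.1.1) (Function.update y u i e.1.2)) := by
  rw [dotp_sub_right, dotp_lift, dotp_lift,
    energy_fix f q y (fun v => hq v (y v) (hY v)), sub_zero, energy, h_cIdx]
  rw [Finset.sum_eq_single u]
  · rw [Function.update_self]; ring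
  · intro v _ hv
    rw [Function.update_of_ne hv]
    exact h_uIdx_fix f q v (y v) (hq v (y v) (hY v))
  · intro h; simp at h

end Aux7
section Aux8
set_option linter.unusedSectionVars false
set_option maxHeartbeats 1600000
set_option maxRecDepth 100000

lemma csInf_image_eq {β : Type*} (F : β → ℝ) (P : Set β) (hP : P.Finite)
    (j0 : β) (hj0 : j0 ∈ P) (hmin : ∀ j ∈ P, F j0 ≤ F j) : sInf (F '' P) = F j0 := by
  apply le_antisymm
  · exact csInf_le (Set.Finite.bddBelow (hP.image F)) ⟨j0, hj0, rfl⟩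
  · refine le_csInf ⟨F j0, j0, hj0, rfl⟩ ?_
    rintro r ⟨j, hj, rfl⟩
    exact hmin j hj

variable (f : GVec X E) (y : ∀ v, X v) (Y : ∀ v, Finset (X v))

lemma reduced_uIdx (v : V) (k : X v) :
    reduced f y Y (uIdx v k) = (f - Padj (subToOne y Y) f) (uIdx v k) := rfl

lemma reduced_pIdx (e : {e : V × V // e ∈ E}) (a : X e.1.1) (b : X e.1.2) :
    reduced f y Y (pIdx e a b) =
      if a ∈ Y e.1.1 then
        if b ∈ Y e.1.2 then
          min ((sInf ((fun i' => (f - Padj (subToOne y Y) f) (pIdx e i' b)) ''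
                  {i' : X e.1.1 | i' ∉ Y e.1.1}))
              + (sInf ((fun j' => (f - Padj (subToOne y Y) f) (pIdx e a j')) ''
                  {j' : X e.1.2 | j' ∉ Y e.1.2})))
            ((f - Padj (subToOne y Y) f) (pIdx e a b))
        else sInf ((fun j' => (f - Padj (subToOne y Y) f) (pIdx e a j')) ''
            {j' : X e.1.2 | j' ∉ Y e.1.2})
      else if b ∈ Y e.1.2 then
        sInf ((fun i' => (f - Padj (subToOne y Y) f) (pIdx e i' b)) ''
            {i' : X e.1.1 | i' ∉ Y e.1.1})
      else 0 := rfl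

end Aux8
section Aux9
set_option linter.unusedSectionVars false
set_option maxHeartbeats 1600000
set_option maxRecDepth 100000

variable (f : GVec X E) (q : ∀ v, X v → X v)
variable (y : ∀ v, X v) (Y : ∀ v, Finset (X v)) (u : V) (i : X u)

lemma per_edge_cost
    (hY : ∀ v, y v ∉ Y v) (hi : i ∈ Y u)
    (hq : ∀ (v : V) (k : X v), k ∉ Y v → q v k = k)
    (hqi : q u i = y u)
    (js : ∀ e : {e : V × V // e ∈ E}, X e.1.2) (is' : ∀ e : {e : V × V // e ∈ E}, X e.1.1)
    (hjs : ∀ e, js e ∉ Y e.1.2) (his : ∀ e, is' e ∉ Y e.1.1)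
    (hjmin : ∀ (e : {e : V × V // e ∈ E}) (h1 : e.1.1 = u), ∀ j ∉ Y e.1.2,
        (f - Padj (subToOne y Y) f) (pIdx e (cast (congrArg X h1.symm) i) (js e))
          ≤ (f - Padj (subToOne y Y) f) (pIdx e (cast (congrArg X h1.symm) i) j))
    (himin : ∀ (e : {e : V × V // e ∈ E}) (h2 : e.1.2 = u), ∀ k ∉ Y e.1.1,
        (f - Padj (subToOne y Y) f) (pIdx e (is' e) (cast (congrArg X h2.symm) i))
          ≤ (f - Padj (subToOne y Y) f) (pIdx e k (cast (congrArg X h2.symm) i)))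
    (c d : V) (hcd : (c, d) ∈ E) :
    (f - Padj q f) (pIdx (⟨(c, d), hcd⟩ : {e : V × V // e ∈ E})
        (Function.update y u i c) (Function.update y u i d))
      + dotp (f - Padj q f) (Lpiece y u i js is' ⟨(c, d), hcd⟩)
    = (if h1 : c = u then
        reduced f y Y (pIdx (⟨(c, d), hcd⟩ : {e : V × V // e ∈ E})
          (cast (congrArg X h1.symm) i) (y d)) else 0)
    + (if h2 : d = u then
        reduced f y Y (pIdx (⟨(c, d), hcd⟩ : {e : V × V // e ∈ E})
          (y c) (cast (congrArg X h2.symm) i)) else 0) := by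
  by_cases h1 : c = u <;> by_cases h2 : d = u
  · subst h1; subst h2
    rw [dif_pos rfl, dif_pos rfl, Function.update_self]
    simp only [Lpiece, dite_true, cast_eq]
    rw [dotp_add_right, dotp_corr4, dotp_corr4]
    have hJ : js (⟨(d, d), hcd⟩ : {e : V × V // e ∈ E}) ∉ Y d := hjs ⟨_, hcd⟩
    have hI : is' (⟨(d, d), hcd⟩ : {e : V × V // e ∈ E}) ∉ Y d := his ⟨_, hcd⟩
    rw [h_pIdx_fix f q ⟨(d, d), hcd⟩ _ _ (hq _ _ hJ) (hq _ _ hJ)]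
    rw [h_pIdx_fix f q ⟨(d, d), hcd⟩ _ _ (hq _ _ hI) (hq _ _ hI)]
    rw [h_pIdx_fix f q ⟨(d, d), hcd⟩ _ _ (hq _ _ hJ) (hq _ _ hI)]
    have e1 : (f - Padj q f) (pIdx (⟨(d, d), hcd⟩ : {e : V × V // e ∈ E}) i (js ⟨(d, d), hcd⟩))
        = (f - Padj (subToOne y Y) f)
            (pIdx (⟨(d, d), hcd⟩ : {e : V × V // e ∈ E}) i (js ⟨(d, d), hcd⟩)) := by
      rw [h_pIdx, h_pIdx]
      dsimp only
      rw [hqi, hq _ _ hJ]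
      simp only [subToOne]
      rw [if_pos hi, if_neg hJ]
    have e2 : (f - Padj q f) (pIdx (⟨(d, d), hcd⟩ : {e : V × V // e ∈ E}) (is' ⟨(d, d), hcd⟩) i)
        = (f - Padj (subToOne y Y) f)
            (pIdx (⟨(d, d), hcd⟩ : {e : V × V // e ∈ E}) (is' ⟨(d, d), hcd⟩) i) := by
      rw [h_pIdx, h_pIdx]
      dsimp only
      rw [hqi, hq _ _ hI]
      simp only [subToOne]
      rw [if_pos hi, if_neg hI]
    rw [reduced_pIdx, reduced_pIdx]
    rw [if_pos hi, if_neg (hY d), if_neg (hY d), if_pos hi]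
    rw [csInf_image_eq _ _ (Set.toFinite _) (js ⟨(d, d), hcd⟩) hJ
      (fun j hj => by simpa [cast_eq] using hjmin ⟨(d, d), hcd⟩ rfl j hj)]
    rw [csInf_image_eq _ _ (Set.toFinite _) (is' ⟨(d, d), hcd⟩) hI
      (fun k hk => by simpa [cast_eq] using himin ⟨(d, d), hcd⟩ rfl k hk)]
    rw [e1, e2]; ring
  · subst h1
    rw [dif_pos rfl, dif_neg h2, Function.update_self, Function.update_of_ne h2]
    simp only [Lpiece, dite_true, dif_neg h2, cast_eq]
    rw [dotp_corr4]
    have hJ : js (⟨(c, d), hcd⟩ : {e : V × V // e ∈ E}) ∉ Y d := hjs ⟨_, hcd⟩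
    rw [h_pIdx_fix f q ⟨(c, d), hcd⟩ _ _ (hq _ _ (hY c)) (hq _ _ hJ)]
    rw [h_pIdx_fix f q ⟨(c, d), hcd⟩ _ _ (hq _ _ (hY c)) (hq _ _ (hY d))]
    have e1 : (f - Padj q f) (pIdx (⟨(c, d), hcd⟩ : {e : V × V // e ∈ E}) i (js ⟨(c, d), hcd⟩))
        = (f - Padj (subToOne y Y) f)
            (pIdx (⟨(c, d), hcd⟩ : {e : V × V // e ∈ E}) i (js ⟨(c, d), hcd⟩)) := by
      rw [h_pIdx, h_pIdx]
      dsimp only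
      rw [hqi, hq _ _ hJ]
      simp only [subToOne]
      rw [if_pos hi, if_neg hJ]
    rw [reduced_pIdx, if_pos hi, if_neg (hY d)]
    rw [csInf_image_eq _ _ (Set.toFinite _) (js ⟨(c, d), hcd⟩) hJ
      (fun j hj => by simpa [cast_eq] using hjmin ⟨(c, d), hcd⟩ rfl j hj)]
    rw [e1]; ring
  · subst h2
    rw [dif_neg h1, dif_pos rfl, Function.update_self, Function.update_of_ne h1]
    simp only [Lpiece, dite_true, dif_neg h1, cast_eq]
    rw [dotp_corr4]
    have hI : is' (⟨(c, d), hcd⟩ : {e : V × V // e ∈ E}) ∉ Y c := his ⟨_, hcd⟩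
    rw [h_pIdx_fix f q ⟨(c, d), hcd⟩ _ _ (hq _ _ hI) (hq _ _ (hY d))]
    rw [h_pIdx_fix f q ⟨(c, d), hcd⟩ _ _ (hq _ _ (hY c)) (hq _ _ (hY d))]
    have e2 : (f - Padj q f) (pIdx (⟨(c, d), hcd⟩ : {e : V × V // e ∈ E}) (is' ⟨(c, d), hcd⟩) i)
        = (f - Padj (subToOne y Y) f)
            (pIdx (⟨(c, d), hcd⟩ : {e : V × V // e ∈ E}) (is' ⟨(c, d), hcd⟩) i) := by
      rw [h_pIdx, h_pIdx]
      dsimp only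
      rw [hqi, hq _ _ hI]
      simp only [subToOne]
      rw [if_pos hi, if_neg hI]
    rw [reduced_pIdx, if_neg (hY c), if_pos hi]
    rw [csInf_image_eq _ _ (Set.toFinite _) (is' ⟨(c, d), hcd⟩) hI
      (fun k hk => by simpa [cast_eq] using himin ⟨(c, d), hcd⟩ rfl k hk)]
    rw [e2]; ring
  · rw [dif_neg h1, dif_neg h2, Function.update_of_ne h1, Function.update_of_ne h2]
    simp only [Lpiece, dif_neg h1, dif_neg h2]
    rw [dotp_zero_right]
    rw [h_pIdx_fix f q ⟨(c, d), hcd⟩ _ _ (hq _ _ (hY c)) (hq _ _ (hY d))]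
    try ring

end Aux9
section Aux10
set_option linter.unusedSectionVars false
set_option maxHeartbeats 1600000
set_option maxRecDepth 100000

lemma lift_eq_zero_or_one (x : ∀ v, X v) (idx : GIdx X E) :
    lift x idx = 0 ∨ lift x idx = 1 := by
  rcases idx with ⟨⟩ | (⟨v, k⟩ | ⟨e, a, b⟩) <;> simp [lift] <;> tauto

variable (y : ∀ v, X v) (Y : ∀ v, Finset (X v)) (u : V) (i : X u)

lemma move_uIdx_zero (hY : ∀ v, y v ∉ Y v) (hi : i ∈ Y u)
    (w : V) (c : X w) (hc : c ∉ Y w) :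
    lift (Function.update y w c) (uIdx u i : GIdx X E) = 0 := by
  rw [lift_uIdx]
  by_cases hw : u = w
  · subst hw
    rw [Function.update_self, if_neg]
    intro h; rw [h] at hc; exact hc hi
  · rw [Function.update_of_ne hw, if_neg]
    intro h; exact hY u (h ▸ hi)

lemma lift_y_uIdx_zero (hY : ∀ v, y v ∉ Y v) (hi : i ∈ Y u) :
    lift y (uIdx u i : GIdx X E) = 0 := by
  rw [lift_uIdx, if_neg]
  intro h; exact hY u (h ▸ hi)

lemma nuVec_at_ui (hY : ∀ v, y v ∉ Y v) (hi : i ∈ Y u)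
    (js : ∀ e : {e : V × V // e ∈ E}, X e.1.2) (is' : ∀ e : {e : V × V // e ∈ E}, X e.1.1)
    (hjs : ∀ e, js e ∉ Y e.1.2) (his : ∀ e, is' e ∉ Y e.1.1) :
    nuVec y u i js is' (uIdx u i) = 1 := by
  rw [nuVec_apply]
  have h0 : lift y (uIdx u i : GIdx X E) = 0 := lift_y_uIdx_zero y Y u i hY hi
  have hbase : lift (Function.update y u i) (uIdx u i : GIdx X E) = 1 := by
    rw [lift_uIdx, if_pos (Function.update_self u i y)]
  have hF : ∀ e : {e : V × V // e ∈ E}, Fpiece y u js e (uIdx u i) = 0 := by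
    intro e
    rw [Fpiece_apply]
    split_ifs
    · rw [move_uIdx_zero y Y u i hY hi _ _ (hjs e), h0, sub_self]
    · rfl
  have hB : ∀ e : {e : V × V // e ∈ E}, Bpiece y u is' e (uIdx u i) = 0 := by
    intro e
    rw [Bpiece_apply]
    split_ifs
    · rw [move_uIdx_zero y Y u i hY hi _ _ (his e), h0, sub_self]
    · rfl
  rw [h0, hbase]
  rw [Finset.sum_eq_zero fun e _ => hF e, Finset.sum_eq_zero fun e _ => hB e,
    Finset.sum_eq_zero fun (e : {e : V × V // e ∈ E}) _ => Lpiece_uIdx y u i js is' e u i]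
  norm_num

end Aux10
set_option linter.unusedSectionVars false
set_option maxHeartbeats 1600000
set_option maxRecDepth 100000

theorem single_node_pruning_sound
    [∀ v, Nonempty (X v)]
    (f : GVec X E) (y : ∀ v, X v) (Y : ∀ v, Finset (X v)) (hY : ∀ v, y v ∉ Y v)
    (u : V) (i : X u) (hi : i ∈ Y u)
    (hneg : reduced f y Y (uIdx u i) +
        (∑ e : {e : V × V // e ∈ E},
          (if h : e.1.1 = u then
            reduced f y Y (pIdx e (cast (congrArg X h.symm) i) (y e.1.2)) else 0)) +
        (∑ e : {e : V × V // e ∈ E},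
          (if h : e.1.2 = u then
            reduced f y Y (pIdx e (y e.1.1) (cast (congrArg X h.symm) i)) else 0)) ≤ 0) :
    ∀ q : ∀ v, X v → X v, InPtwo y q →
      StrictlyLambdaImproving (localPolytope X E) f q →
      (∀ v : V, Set.range (subToOne y Y v) ⊆ Set.range (q v)) →
      q u i = i := by
  intro q hPq hSq hrange
  by_contra hne
  obtain ⟨Z, hZy, hqdef⟩ := hPq
  have hiZ : i ∈ Z u := by
    by_contra hiZ
    exact hne (by rw [hqdef, if_neg hiZ])
  have hZY : ∀ v, Z v ⊆ Y v := by
    intro v k hk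
    by_contra hkY
    have hkr : k ∈ Set.range (subToOne y Y v) := ⟨k, by simp [subToOne, hkY]⟩
    obtain ⟨m, hm⟩ := hrange v hkr
    rw [hqdef] at hm
    by_cases hmZ : m ∈ Z v
    · rw [if_pos hmZ] at hm
      exact (hZy v) (hm ▸ hk)
    · rw [if_neg hmZ] at hm
      exact hmZ (hm ▸ hk)
  have hq_notY : ∀ (v : V) (k : X v), k ∉ Y v → q v k = k := by
    intro v k hk
    rw [hqdef, if_neg fun hkZ => hk (hZY v hkZ)]
  have hqi : q u i = y u := by rw [hqdef, if_pos hiZ]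
  have hqy : ∀ v, q v (y v) = y v := fun v => hq_notY v (y v) (hY v)
  have hyi : y u ≠ i := fun h => hY u (h ▸ hi)
  -- minimizer selections
  have hcompl : ∀ v : V, ((Y v)ᶜ : Finset (X v)).Nonempty :=
    fun v => ⟨y v, Finset.mem_compl.2 (hY v)⟩
  have hjsel : ∀ (e : {e : V × V // e ∈ E}),
      ∃ j : X e.1.2, j ∉ Y e.1.2 ∧ ∀ j' ∉ Y e.1.2,
        (f - Padj (subToOne y Y) f) (pIdx e
          (if h : e.1.1 = u then cast (congrArg X h.symm) i else y e.1.1) j)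
        ≤ (f - Padj (subToOne y Y) f) (pIdx e
          (if h : e.1.1 = u then cast (congrArg X h.symm) i else y e.1.1) j') := by
    intro e
    obtain ⟨j, hj, hmin⟩ := Finset.exists_min_image ((Y e.1.2)ᶜ)
      (fun j => (f - Padj (subToOne y Y) f) (pIdx e
        (if h : e.1.1 = u then cast (congrArg X h.symm) i else y e.1.1) j)) (hcompl e.1.2)
    exact ⟨j, Finset.mem_compl.1 hj, fun j' hj' => hmin j' (Finset.mem_compl.2 hj')⟩
  choose js hjs hjmin0 using hjsel
  have hisel : ∀ (e : {e : V × V // e ∈ E}),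
      ∃ k : X e.1.1, k ∉ Y e.1.1 ∧ ∀ k' ∉ Y e.1.1,
        (f - Padj (subToOne y Y) f) (pIdx e k
          (if h : e.1.2 = u then cast (congrArg X h.symm) i else y e.1.2))
        ≤ (f - Padj (subToOne y Y) f) (pIdx e k'
          (if h : e.1.2 = u then cast (congrArg X h.symm) i else y e.1.2)) := by
    intro e
    obtain ⟨k, hk, hmin⟩ := Finset.exists_min_image ((Y e.1.1)ᶜ)
      (fun k => (f - Padj (subToOne y Y) f) (pIdx e k
        (if h : e.1.2 = u then cast (congrArg X h.symm) i else y e.1.2))) (hcompl e.1.1)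
    exact ⟨k, Finset.mem_compl.1 hk, fun k' hk' => hmin k' (Finset.mem_compl.2 hk')⟩
  choose is' his himin0 using hisel
  have hjmin : ∀ (e : {e : V × V // e ∈ E}) (h1 : e.1.1 = u), ∀ j ∉ Y e.1.2,
      (f - Padj (subToOne y Y) f) (pIdx e (cast (congrArg X h1.symm) i) (js e))
        ≤ (f - Padj (subToOne y Y) f) (pIdx e (cast (congrArg X h1.symm) i) j) := by
    intro e h1 j hj
    have := hjmin0 e j hj
    rwa [dif_pos h1] at this
  have himin : ∀ (e : {e : V × V // e ∈ E}) (h2 : e.1.2 = u), ∀ k ∉ Y e.1.1,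
      (f - Padj (subToOne y Y) f) (pIdx e (is' e) (cast (congrArg X h2.symm) i))
        ≤ (f - Padj (subToOne y Y) f) (pIdx e k (cast (congrArg X h2.symm) i)) := by
    intro e h2 k hk
    have := himin0 e k hk
    rwa [dif_pos h2] at this
  -- the perturbation and the feasible point
  have hM0 : (0:ℝ) ≤ ∑ idx : GIdx X E, |nuVec y u i js is' idx| :=
    Finset.sum_nonneg fun idx _ => abs_nonneg _
  set M : ℝ := ∑ idx : GIdx X E, |nuVec y u i js is' idx| with hMdef
  have hMb : ∀ idx : GIdx X E, |nuVec y u i js is' idx| ≤ M := fun idx =>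
    Finset.single_le_sum (fun j _ => abs_nonneg (nuVec y u i js is' j))
      (Finset.mem_univ idx)
  set s : ℝ := 1 / (1 + M) with hsdef
  have hs0 : 0 < s := by rw [hsdef]; positivity
  have hsM : s * M ≤ 1 := by
    rw [hsdef, div_mul_eq_mul_div, one_mul, div_le_one (by linarith)]
    linarith
  set μ : GVec X E := lift y + s • nuVec y u i js is' with hμdef
  have hμapply : ∀ idx, μ idx = lift y idx + s * nuVec y u i js is' idx := fun idx => rfl
  have hμc : μ cIdx = 1 := by
    rw [hμapply, lift_cIdx, nuVec_cIdx, mul_zero, add_zero]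
  have hμΛ : μ ∈ localPolytope X E := by
    refine ⟨?_, hμc, ?_, ?_, ?_⟩
    · intro idx
      rcases lift_eq_zero_or_one y idx with h0 | h1
      · rw [hμapply, h0, zero_add]
        exact mul_nonneg hs0.le (nuVec_nonneg y u i js is' idx h0)
      · rw [hμapply, h1]
        have h2 := hMb idx
        have h3 := abs_le.1 h2
        nlinarith [h3.1, h3.2]
    · intro v
      rw [hμc]
      simp only [hμapply]
      rw [Finset.sum_add_distrib, lift_node_sum, ← Finset.mul_sum,
        nuVec_node_sum, mul_zero, add_zero]
    · intro e a
      simp only [hμapply]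
      rw [Finset.sum_add_distrib, lift_row_sum, ← Finset.mul_sum, nuVec_row_sum]
    · intro e b
      simp only [hμapply]
      rw [Finset.sum_add_distrib, lift_col_sum, ← Finset.mul_sum, nuVec_col_sum]
  -- cost bound
  have hui : (f - Padj q f) (uIdx u i) = reduced f y Y (uIdx u i) := by
    rw [reduced_uIdx, h_uIdx, h_uIdx, hqi]
    have : subToOne y Y u i = y u := by simp [subToOne, hi]
    rw [this]
  have hedges : ∑ e : {e : V × V // e ∈ E},
      ((f - Padj q f) (pIdx e (Function.update y u i e.1.1) (Function.update y u i e.1.2))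
        + dotp (f - Padj q f) (Lpiece y u i js is' e))
      = (∑ e : {e : V × V // e ∈ E},
          (if h : e.1.1 = u then
            reduced f y Y (pIdx e (cast (congrArg X h.symm) i) (y e.1.2)) else 0)) +
        (∑ e : {e : V × V // e ∈ E},
          (if h : e.1.2 = u then
            reduced f y Y (pIdx e (y e.1.1) (cast (congrArg X h.symm) i)) else 0)) := by
    rw [← Finset.sum_add_distrib]
    refine Finset.sum_congr rfl fun e _ => ?_
    obtain ⟨⟨c, d⟩, hcd⟩ := e
    exact per_edge_cost f q y Y u i hY hi hq_notY hqi js is' hjs his hjmin himin c d hcd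
  have hcostν : dotp (f - Padj q f) (nuVec y u i js is' ) ≤ 0 := by
    rw [nuVec, dotp_add_right, dotp_add_right, dotp_add_right,
      dotp_sum_right, dotp_sum_right, dotp_sum_right]
    rw [Finset.sum_eq_zero fun e _ => Fpiece_cost f q y u js Y hjs hq_notY hY e]
    rw [Finset.sum_eq_zero fun e _ => Bpiece_cost f q y u is' Y his hq_notY hY e]
    rw [dotp_base f q y u i Y hY hq_notY]
    calc (f - Padj q f) (uIdx u i) +
          (∑ e : {e : V × V // e ∈ E}, (f - Padj q f)
            (pIdx e (Function.update y u i e.1.1) (Function.update y u i e.1.2)))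
          + 0 + 0 + ∑ e : {e : V × V // e ∈ E},
              dotp (f - Padj q f) (Lpiece y u i js is' e)
        = (f - Padj q f) (uIdx u i) + ∑ e : {e : V × V // e ∈ E},
            ((f - Padj q f) (pIdx e (Function.update y u i e.1.1)
              (Function.update y u i e.1.2))
             + dotp (f - Padj q f) (Lpiece y u i js is' e)) := by
          rw [Finset.sum_add_distrib]; ring
      _ ≤ 0 := by rw [hedges, hui, ← add_assoc]; exact hneg
  have hcost : dotp (f - Padj q f) μ ≤ 0 := by
    rw [hμdef, dotp_add_right, dotp_smul_right, dotp_lift,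
      energy_fix f q y hqy, zero_add]
    exact mul_nonpos_of_nonneg_of_nonpos hs0.le hcostν
  have hge : 0 ≤ dotp (f - Padj q f) μ := hSq.1.2 ⟨μ, hμΛ, rfl⟩
  have heq : dotp (f - Padj q f) μ = 0 := le_antisymm hcost hge
  have hfix := hSq.2 μ hμΛ heq
  have hL : Pmap q μ (uIdx u i) = 0 := by
    show (∑ k : X u, if q u k = i then μ (uIdx u k) else 0) = 0
    refine Finset.sum_eq_zero fun k _ => ?_
    rw [if_neg]
    intro hk
    rw [hqdef] at hk
    by_cases hkZ : k ∈ Z u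
    · rw [if_pos hkZ] at hk; exact hyi hk
    · rw [if_neg hkZ] at hk; exact hkZ (hk ▸ hiZ)
  have hR : μ (uIdx u i) = s := by
    rw [hμapply, lift_y_uIdx_zero y Y u i hY hi,
      nuVec_at_ui y Y u i hY hi js is' hjs his, mul_one, zero_add]
  rw [hfix, hR] at hL
  exact absurd hL (ne_of_gt hs0)


end
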